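/- Let T be an orthogonal matrix in O(N) with T^2 = -I. Then N is even, T is antisymmetric, and there exists R in O(N) such that R T R^{-1} = J, where J is the block matrix with blocks [[0, I],[-I, 0]] and I is the (N/2)×(N/2) identity matrix. -/
import Mathlib


open Matrix


lemma exists_orthofamily (N : ℕ) (T : Matrix (Fin N) (Fin N) ℝ)
    (hiso : ∀ x y : Fin N → ℝ, T.mulVec x ⬝ᵥ T.mulVec y = x ⬝ᵥ y)
    (hT2 : ∀ x : Fin N → ℝ, T.mulVec (T.mulVec x) = -x) :
    ∀ k, 2 * k ≤ N → ∃ v : Fin k → (Fin N → ℝ),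
      (∀ i j, v i ⬝ᵥ v j = if i = j then 1 else 0) ∧
      (∀ i j, v i ⬝ᵥ T.mulVec (v j) = 0) := by
  intro k
  induction k with
  | zero => exact fun _ => ⟨fun i => i.elim0, fun i => i.elim0, fun i => i.elim0⟩
  | succ k ih =>
    intro hk
    obtain ⟨v, hv1, hv2⟩ := ih (by omega)
    set w : Fin k ⊕ Fin k → (Fin N → ℝ) := Sum.elim v (fun i => T.mulVec (v i)) with hw
    set φ : (Fin N → ℝ) →ₗ[ℝ] (Fin k ⊕ Fin k → ℝ) :=
      { toFun := fun x s => w s ⬝ᵥ x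
        map_add' := by intro x y; funext s; simp [dotProduct_add]
        map_smul' := by intro c x; funext s; simp [dotProduct_smul] } with hφ
    have hninj : ¬ Function.Injective φ := by
      intro h
      have h1 := LinearMap.finrank_le_finrank_of_injective h
      simp only [Module.finrank_pi, Fintype.card_fin, Fintype.card_sum] at h1
      omega
    have hker : LinearMap.ker φ ≠ ⊥ := by
      intro h; exact hninj (LinearMap.ker_eq_bot.mp h)
    obtain ⟨x, hxk, hx0⟩ := Submodule.exists_mem_ne_zero_of_ne_bot hker
    have hxw : ∀ s, w s ⬝ᵥ x = 0 := by
      intro s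
      have := LinearMap.mem_ker.mp hxk
      exact congrFun this s
    have hs : 0 < x ⬝ᵥ x := by
      have hnn : 0 ≤ x ⬝ᵥ x := Finset.sum_nonneg fun i _ => mul_self_nonneg _
      rcases lt_or_eq_of_le hnn with h | h
      · exact h
      · exact absurd (dotProduct_self_eq_zero.mp h.symm) hx0
    set c : ℝ := (Real.sqrt (x ⬝ᵥ x))⁻¹ with hc
    set u : Fin N → ℝ := c • x with hu
    have huu : u ⬝ᵥ u = 1 := by
      rw [hu, smul_dotProduct, dotProduct_smul, smul_eq_mul, smul_eq_mul, hc,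
        ← mul_assoc, ← mul_inv]
      rw [Real.mul_self_sqrt hs.le]
      exact inv_mul_cancel₀ hs.ne'
    have huw : ∀ s, w s ⬝ᵥ u = 0 := by
      intro s; rw [hu, dotProduct_smul, hxw s, smul_zero]
    have huv : ∀ i, v i ⬝ᵥ u = 0 := fun i => huw (Sum.inl i)
    have huTv : ∀ i, T.mulVec (v i) ⬝ᵥ u = 0 := fun i => huw (Sum.inr i)
    have hTneg : ∀ a b : Fin N → ℝ, a ⬝ᵥ T.mulVec b = - (T.mulVec a ⬝ᵥ b) := by
      intro a b
      calc a ⬝ᵥ T.mulVec b = T.mulVec a ⬝ᵥ T.mulVec (T.mulVec b) := (hiso _ _).symm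
        _ = T.mulVec a ⬝ᵥ (-b) := by rw [hT2]
        _ = - (T.mulVec a ⬝ᵥ b) := by rw [dotProduct_neg]
    refine ⟨Fin.snoc v u, ?_, ?_⟩
    · intro i j
      induction i using Fin.lastCases with
      | last =>
        induction j using Fin.lastCases with
        | last => simpa using huu
        | cast j =>
          rw [Fin.snoc_last, Fin.snoc_castSucc, dotProduct_comm, huv j,
            if_neg (by simp [Fin.ext_iff]; omega)]
      | cast i =>
        induction j using Fin.lastCases with
        | last =>
          rw [Fin.snoc_last, Fin.snoc_castSucc, huv i,
            if_neg (by simp [Fin.ext_iff]; omega)]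
        | cast j =>
          rw [Fin.snoc_castSucc, Fin.snoc_castSucc, hv1 i j]
          congr 1
          simp [Fin.ext_iff]
    · intro i j
      induction i using Fin.lastCases with
      | last =>
        induction j using Fin.lastCases with
        | last =>
          rw [Fin.snoc_last]
          have h1 := hTneg u u
          rw [dotProduct_comm (T.mulVec u) u] at h1
          linarith
        | cast j =>
          rw [Fin.snoc_last, Fin.snoc_castSucc, dotProduct_comm]
          exact huTv j
      | cast i =>
        induction j using Fin.lastCases with
        | last =>
          rw [Fin.snoc_last, Fin.snoc_castSucc, hTneg, huTv i, neg_zero]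
        | cast j =>
          rw [Fin.snoc_castSucc, Fin.snoc_castSucc]
          exact hv2 i j

/-- The block matrix `J = [[0, I], [-I, 0]]` where `I` is the `(N/2) × (N/2)` identity,
viewed as an `N × N` real matrix (for `N` even). -/
def stdJ (N : ℕ) : Matrix (Fin N) (Fin N) ℝ :=
  Matrix.of fun i j : Fin N =>
    if (i : ℕ) + N / 2 = (j : ℕ) then (1 : ℝ)
    else if (j : ℕ) + N / 2 = (i : ℕ) then -1 else 0

/-- An orthogonal matrix `T ∈ O(N)` with `T² = -I` can exist only for `N` even;
moreover `T` is antisymmetric and there exists `R ∈ O(N)` with `R T R⁻¹ = J`, where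
`J = [[0, I], [-I, 0]]` in `(N/2) × (N/2)` blocks. -/
theorem stmt_1 (N : ℕ) (T : Matrix (Fin N) (Fin N) ℝ)
    (hT : T ∈ Matrix.orthogonalGroup (Fin N) ℝ) (hinv : T * T = -1) :
    Even N ∧ Tᵀ = -T ∧
    ∃ R ∈ Matrix.orthogonalGroup (Fin N) ℝ, R * T * R⁻¹ = stdJ N := by
  have hTt : Tᵀ * T = 1 := by
    rw [Matrix.mem_orthogonalGroup_iff'] at hT
    simpa using hT
  -- Even N
  have hdet : (T.det) ^ 2 = (-1 : ℝ) ^ N := by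
    have h := congrArg Matrix.det hinv
    rw [Matrix.det_mul] at h
    rw [sq, h]
    have : (-1 : Matrix (Fin N) (Fin N) ℝ) = -(1 : Matrix (Fin N) (Fin N) ℝ) := rfl
    rw [this, Matrix.det_neg]
    simp
  have heven : Even N := by
    by_contra hodd
    rw [Nat.not_even_iff_odd] at hodd
    rw [Odd.neg_one_pow hodd] at hdet
    nlinarith [sq_nonneg T.det]
  -- antisymmetry
  have hanti : Tᵀ = -T := by
    calc Tᵀ = Tᵀ * 1 := (mul_one _).symm
      _ = Tᵀ * (-(T * T)) := by rw [hinv]; simp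
      _ = -((Tᵀ * T) * T) := by noncomm_ring
      _ = -T := by rw [hTt, one_mul]
  refine ⟨heven, hanti, ?_⟩
  -- basic vector facts
  have hiso : ∀ x y : Fin N → ℝ, T.mulVec x ⬝ᵥ T.mulVec y = x ⬝ᵥ y := by
    intro x y
    rw [Matrix.dotProduct_mulVec, ← Matrix.mulVec_transpose, Matrix.mulVec_mulVec, hTt,
      Matrix.one_mulVec]
  have hT2 : ∀ x : Fin N → ℝ, T.mulVec (T.mulVec x) = -x := by
    intro x
    rw [Matrix.mulVec_mulVec, hinv, Matrix.neg_mulVec, Matrix.one_mulVec]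
  obtain ⟨t, ht⟩ := heven
  have hm : N / 2 = t := by omega
  obtain ⟨v, hv1, hv2⟩ := exists_orthofamily N T hiso hT2 t (by omega)
  have hv1' : ∀ a b : Fin t, v a ⬝ᵥ v b = if (a : ℕ) = (b : ℕ) then 1 else 0 := by
    intro a b
    rw [hv1]
    congr 1
    simp [Fin.ext_iff]
  set r : Fin N → Fin N → ℝ := fun i =>
    if h : (i : ℕ) < t then v ⟨i, h⟩ else -(T.mulVec (v ⟨(i : ℕ) - t, by omega⟩)) with hr
  set R : Matrix (Fin N) (Fin N) ℝ := Matrix.of r with hR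
  have hRRT : R * Rᵀ = 1 := by
    ext i j
    have hmul : (R * Rᵀ) i j = r i ⬝ᵥ r j := by
      simp [Matrix.mul_apply, Matrix.transpose_apply, dotProduct, hR]
    rw [hmul, Matrix.one_apply, hr]
    by_cases hi : (i : ℕ) < t <;> by_cases hj : (j : ℕ) < t <;> simp only [hi, hj, dif_pos, dif_neg, not_false_iff]
    · rw [hv1]
      congr 1
      simp [Fin.ext_iff]
    · rw [dotProduct_neg, hv2, neg_zero, if_neg (show i ≠ j by simp [Fin.ext_iff]; omega)]
    · rw [neg_dotProduct, dotProduct_comm, hv2, neg_zero,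
        if_neg (show i ≠ j by simp [Fin.ext_iff]; omega)]
    · rw [neg_dotProduct, dotProduct_neg, neg_neg, hiso, hv1]
      congr 1
      simp only [Fin.ext_iff, eq_iff_iff]
      omega
  have hRmem : R ∈ Matrix.orthogonalGroup (Fin N) ℝ := by
    rw [Matrix.mem_orthogonalGroup_iff]
    simpa using hRRT
  have hRinv : R⁻¹ = Rᵀ := Matrix.inv_eq_right_inv hRRT
  refine ⟨R, hRmem, ?_⟩
  rw [hRinv]
  ext i j
  have hmul : (R * T * Rᵀ) i j = r i ⬝ᵥ T.mulVec (r j) := by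
    simp only [Matrix.mul_apply, Matrix.transpose_apply, dotProduct, Matrix.mulVec, hR,
      Matrix.of_apply, dotProduct, Finset.sum_mul, Finset.mul_sum]
    rw [Finset.sum_comm]
    apply Finset.sum_congr rfl
    intro k _
    apply Finset.sum_congr rfl
    intro l _
    ring
  rw [hmul, hr]
  simp only [stdJ, Matrix.of_apply, hm]
  by_cases hi : (i : ℕ) < t <;> by_cases hj : (j : ℕ) < t <;>
    simp only [hi, hj, dif_pos, dif_neg, not_false_iff]
  · rw [hv2]
    have h1 : ¬((i : ℕ) + t = (j : ℕ)) := by omega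
    have h2 : ¬((j : ℕ) + t = (i : ℕ)) := by omega
    rw [if_neg h1, if_neg h2]
  · rw [Matrix.mulVec_neg, hT2, neg_neg, hv1']
    split_ifs with h1 h2 h3 h4 h5 <;> (try simp only [Fin.val_mk] at h1) <;> (try rfl) <;> (try norm_num) <;> omega
  · rw [neg_dotProduct, hiso, hv1']
    split_ifs with h1 h2 h3 h4 h5 <;> (try simp only [Fin.val_mk] at h1) <;> (try rfl) <;> (try norm_num) <;> omega
  · rw [Matrix.mulVec_neg, hT2, neg_neg, neg_dotProduct, dotProduct_comm, hv2, neg_zero,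
      if_neg (show ¬((i : ℕ) + t = (j : ℕ)) by omega),
      if_neg (show ¬((j : ℕ) + t = (i : ℕ)) by omega)]
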